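/- Fix integers m, n ≥ 0 with m + n ≥ 2. Then Σ_{j=0}^{n} (−2)^j · C(n+j+1, 2j+1) / C(n+m−1+j, j) = (n+m−1) · ∫_0^{π/2} cos(θ)^{n+m−2} · sin((n+1)θ) dθ. -/

import Mathlib

open Finset Real

lemma beta_nat (j : ℕ) : ∀ K : ℕ, ∫ u in (0:ℝ)..1, u^K * (1-u)^j
    = (K.factorial * j.factorial : ℝ) / (K+j+1).factorial := by
  induction j with
  | zero =>
    intro K
    simp only [pow_zero, mul_one, integral_pow, one_pow]
    rw [Nat.factorial_succ]
    push_cast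
    rw [zero_pow (by omega)]
    have : ((K:ℝ)+1) ≠ 0 := by positivity
    have : (K.factorial : ℝ) ≠ 0 := by positivity
    field_simp
    simp
  | succ j ih =>
    intro K
    have hu : ∀ x ∈ Set.uIcc (0:ℝ) 1, HasDerivAt (fun x : ℝ => (1-x)^(j+1))
        ((j+1 : ℝ) * (1-x)^j * (-1)) x := by
      intro x _
      exact (((hasDerivAt_id x).const_sub 1).pow (j+1)).congr_deriv (by simp only [id_eq]; push_cast; ring)
    have hv : ∀ x ∈ Set.uIcc (0:ℝ) 1, HasDerivAt (fun x : ℝ => x^(K+1) / (K+1))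
        (x^K) x := by
      intro x _
      have := (hasDerivAt_pow (K+1) x).div_const (K+1)
      refine this.congr_deriv ?_
      rw [Nat.add_sub_cancel]; push_cast; field_simp
    have key := intervalIntegral.integral_mul_deriv_eq_deriv_mul hu hv
      (by apply Continuous.intervalIntegrable; continuity)
      (by apply Continuous.intervalIntegrable; continuity)
    have h1 : ∫ x in (0:ℝ)..1, x^K * (1-x)^(j+1)
        = ∫ x in (0:ℝ)..1, (1-x)^(j+1) * x^K := by
      congr 1; ext x; ring
    rw [h1, key]
    have h2 : ∫ x in (0:ℝ)..1, ((j+1:ℝ) * (1-x)^j * (-1)) * (x^(K+1)/(K+1))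
        = (-(j+1:ℝ)/(K+1)) * ∫ x in (0:ℝ)..1, x^(K+1) * (1-x)^j := by
      rw [← intervalIntegral.integral_const_mul]
      congr 1; ext x
      have : ((K:ℝ)+1) ≠ 0 := by positivity
      field_simp
    rw [h2, ih (K+1)]
    have hK : ((K:ℝ)+1) ≠ 0 := by positivity
    have hf1 : ((K+1).factorial : ℝ) = (K+1) * K.factorial := by
      rw [Nat.factorial_succ]; push_cast; ring
    have hf2 : ((j+1).factorial : ℝ) = (j+1) * j.factorial := by
      rw [Nat.factorial_succ]; push_cast; ring
    have hf3 : (K+1+j+1 : ℕ) = (K+(j+1)+1 : ℕ) := by omega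
    have hfpos : ((K+(j+1)+1).factorial : ℝ) ≠ 0 := by positivity
    rw [hf3, hf1, hf2]
    simp only [one_pow, zero_pow, Nat.succ_ne_zero]
    field_simp
    ring

noncomputable def cc (n j : ℕ) : ℝ := (-2)^j * ((n+j+1).choose (2*j+1) : ℝ)

lemma cc_eq_zero {n j : ℕ} (h : n < j) : cc n j = 0 := by
  unfold cc
  rw [Nat.choose_eq_zero_of_lt (by omega)]
  simp

lemma choose_id (a t : ℕ) : (a+2).choose (t+2) + a.choose (t+2)
    = 2 * ((a+1).choose (t+2)) + a.choose t := by
  have h1 : (a+2).choose (t+2) = (a+1).choose (t+1) + (a+1).choose (t+2) :=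
    Nat.choose_succ_succ _ _
  have h2 : (a+1).choose (t+1) = a.choose t + a.choose (t+1) := Nat.choose_succ_succ _ _
  have h3 : (a+1).choose (t+2) = a.choose (t+1) + a.choose (t+2) := Nat.choose_succ_succ _ _
  omega

lemma cc_rec (n j : ℕ) : cc (n+2) (j+1) = 2 * cc (n+1) (j+1) - 2 * cc (n+1) j - cc n (j+1) := by
  unfold cc
  have e1 : (n+2)+(j+1)+1 = (n+j+2)+2 := by ring
  have e2 : 2*(j+1)+1 = (2*j+1)+2 := by ring
  have e3 : (n+1)+(j+1)+1 = (n+j+2)+1 := by ring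
  have e4 : (n+1)+j+1 = n+j+2 := by ring
  have e5 : n+(j+1)+1 = n+j+2 := by ring
  rw [e1, e2, e3, e4, e5]
  have keyR : ((((n+j+2)+2).choose ((2*j+1)+2) : ℝ)) + (((n+j+2)).choose ((2*j+1)+2) : ℝ)
      = 2*((((n+j+2)+1).choose ((2*j+1)+2)) : ℝ) + (((n+j+2)).choose (2*j+1) : ℝ) := by
    exact_mod_cast choose_id (n+j+2) (2*j+1)
  simp only [pow_succ]
  linear_combination ((-2:ℝ))^j * (-2) * keyR

noncomputable def SS (n : ℕ) (x : ℝ) : ℝ := ∑ j ∈ Finset.range (n+1), cc n j * (1-x)^j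

lemma hc0 (k : ℕ) : cc k 0 = (k:ℝ) + 1 := by
  unfold cc
  rw [show 2*0+1 = 1 by rfl, Nat.choose_one_right]
  push_cast
  ring

lemma SS_rec (n : ℕ) (x : ℝ) : SS (n+2) x = 2*x*(SS (n+1) x) - SS n x := by
  have hext0 : SS n x = ∑ j ∈ Finset.range (n+3), cc n j * (1-x)^j := by
    unfold SS
    apply Finset.sum_subset (Finset.range_subset_range.2 (by omega))
    intro j hj hj'
    rw [cc_eq_zero (by simp at hj hj' ⊢; omega)]
    ring
  have hA : 2*x*(SS (n+1) x) = (∑ j ∈ Finset.range (n+3), 2 * cc (n+1) j * (1-x)^j)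
      - ∑ j ∈ Finset.range (n+2), 2 * cc (n+1) j * (1-x)^(j+1) := by
    have h1 : (∑ j ∈ Finset.range (n+3), 2 * cc (n+1) j * (1-x)^j)
        = ∑ j ∈ Finset.range (n+2), 2 * cc (n+1) j * (1-x)^j := by
      symm
      apply Finset.sum_subset (Finset.range_subset_range.2 (by omega))
      intro j hj hj'
      rw [cc_eq_zero (by simp at hj hj' ⊢; omega)]
      ring
    rw [h1]
    unfold SS
    rw [Finset.mul_sum, ← Finset.sum_sub_distrib]
    exact Finset.sum_congr rfl fun j _ => by ring
  rw [hA, hext0]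
  unfold SS
  rw [Finset.sum_range_succ' (fun j => cc (n+2) j * (1-x)^j) (n+2)]
  rw [Finset.sum_range_succ' (fun j => 2 * cc (n+1) j * (1-x)^j) (n+2)]
  rw [Finset.sum_range_succ' (fun j => cc n j * (1-x)^j) (n+2)]
  have hmain : ∑ j ∈ Finset.range (n+2), cc (n+2) (j+1) * (1-x)^(j+1)
      = (∑ j ∈ Finset.range (n+2), 2 * cc (n+1) (j+1) * (1-x)^(j+1))
        - (∑ j ∈ Finset.range (n+2), 2 * cc (n+1) j * (1-x)^(j+1))
        - ∑ j ∈ Finset.range (n+2), cc n (j+1) * (1-x)^(j+1) := by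
    rw [← Finset.sum_sub_distrib, ← Finset.sum_sub_distrib]
    apply Finset.sum_congr rfl
    intro j _
    rw [cc_rec]
    ring
  rw [hmain, hc0, hc0, hc0]
  push_cast
  ring

lemma trig_id (n : ℕ) (θ : ℝ) : Real.sin θ * SS n (Real.cos θ) = Real.sin (((n:ℝ)+1) * θ) := by
  induction n using Nat.twoStepInduction with
  | zero =>
    unfold SS cc
    norm_num
  | one =>
    unfold SS
    rw [Finset.sum_range_succ, Finset.sum_range_succ, Finset.sum_range_zero]
    rw [hc0]
    unfold cc
    norm_num
    rw [Real.sin_two_mul]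
    ring
  | more n ih1 ih2 =>
    rw [SS_rec]
    have e1 : ((n:ℝ)+2+1)*θ = ((n:ℝ)+1+1)*θ + θ := by ring
    have e2 : ((n:ℝ)+1)*θ = ((n:ℝ)+1+1)*θ - θ := by ring
    push_cast
    rw [e1, Real.sin_add]
    push_cast at ih1 ih2
    rw [e2, Real.sin_sub] at ih1
    linear_combination 2*Real.cos θ*ih2 - ih1

lemma subst_int (K j : ℕ) :
    ∫ θ in (0:ℝ)..(Real.pi/2), Real.sin θ * (Real.cos θ^K * (1-Real.cos θ)^j)
      = ∫ u in (0:ℝ)..1, u^K*(1-u)^j := by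
  have h := intervalIntegral.integral_comp_smul_deriv
    (f := Real.cos) (f' := fun x => -Real.sin x)
    (g := fun u : ℝ => u^K*(1-u)^j) (a := 0) (b := Real.pi/2)
    (fun x _ => Real.hasDerivAt_cos x)
    (Continuous.continuousOn (by continuity))
    (by continuity)
  rw [Real.cos_zero, Real.cos_pi_div_two] at h
  simp only [smul_eq_mul, Function.comp_apply] at h
  have hL : ∫ x in (0:ℝ)..(Real.pi/2), (-Real.sin x) * (Real.cos x^K*(1-Real.cos x)^j)
      = -∫ θ in (0:ℝ)..(Real.pi/2), Real.sin θ * (Real.cos θ^K * (1-Real.cos θ)^j) := by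
    rw [← intervalIntegral.integral_neg]
    congr 1
    ext x
    ring
  rw [hL, intervalIntegral.integral_symm 0 1] at h
  linarith

/-- Integral representation of the normalized average
outcome-collision probability `P₂(m,n)` of an `n`-photon, `m`-mode Fock boson sampler. -/
theorem stmt6 (m n : ℕ) (h : 2 ≤ m + n) :
    ∑ j ∈ Finset.range (n + 1),
        (-2 : ℝ) ^ j * ((n + j + 1).choose (2 * j + 1) : ℝ) /
          ((n + m - 1 + j).choose j : ℝ)
      = ((n : ℝ) + m - 1) *
          ∫ θ in (0:ℝ)..(Real.pi / 2),
            Real.cos θ ^ (n + m - 2) * Real.sin ((n + 1) * θ) := by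
  have hK2 : n + m = (n + m - 2) + 2 := by omega
  set K := n + m - 2 with hKdef
  have hKn : n + m - 1 = K + 1 := by omega
  have hKc : (n:ℝ) + m - 1 = (K:ℝ) + 1 := by
    have h2 : n + m = K + 2 := by omega
    have := congrArg (Nat.cast : ℕ → ℝ) h2
    push_cast at this
    linarith
  have hint : (∫ θ in (0:ℝ)..(Real.pi/2), Real.cos θ ^ K * Real.sin (((n:ℝ) + 1) * θ))
      = ∑ j ∈ Finset.range (n+1), cc n j * ∫ u in (0:ℝ)..1, u^K*(1-u)^j := by
    have e : ∀ θ : ℝ, Real.cos θ ^ K * Real.sin (((n:ℝ)+1)*θ)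
        = ∑ j ∈ Finset.range (n+1), cc n j * (Real.sin θ * (Real.cos θ^K * (1-Real.cos θ)^j)) := by
      intro θ
      rw [← trig_id n θ]
      unfold SS
      rw [Finset.mul_sum, Finset.mul_sum]
      exact Finset.sum_congr rfl fun j _ => by ring
    simp only [e]
    rw [intervalIntegral.integral_finset_sum]
    · exact Finset.sum_congr rfl fun j _ => by
        rw [intervalIntegral.integral_const_mul, subst_int]
    · intro j _
      exact (continuous_const.mul (Real.continuous_sin.mul ((Real.continuous_cos.pow K).mul
        ((continuous_const.sub Real.continuous_cos).pow j)))).intervalIntegrable _ _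
  rw [hKc, hint, Finset.mul_sum]
  apply Finset.sum_congr rfl
  intro j _
  rw [beta_nat j K]
  rw [show n + m - 1 + j = K + 1 + j from by omega]
  have hcf : (((K+1+j).choose j : ℕ) : ℝ) * ((K+1).factorial : ℝ) * (j.factorial : ℝ)
      = ((K+1+j).factorial : ℝ) := by
    exact_mod_cast Nat.add_choose_mul_factorial_mul_factorial (K+1) j
  have hch : (0:ℝ) < ((K+1+j).choose j : ℝ) := by
    exact_mod_cast Nat.choose_pos (by omega)
  have hf1 : (0:ℝ) < ((K+1).factorial : ℝ) := by exact_mod_cast Nat.factorial_pos _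
  have hf2 : (0:ℝ) < (j.factorial : ℝ) := by exact_mod_cast Nat.factorial_pos _
  have hf3 : (0:ℝ) < ((K+j+1).factorial : ℝ) := by exact_mod_cast Nat.factorial_pos _
  have hf4 : ((K+1+j).factorial : ℝ) = ((K+j+1).factorial : ℝ) := by
    rw [show K+1+j = K+j+1 from by omega]
  have hf5 : ((K+1).factorial : ℝ) = ((K:ℝ)+1) * (K.factorial : ℝ) := by
    rw [Nat.factorial_succ]; push_cast; ring
  have hkey : (((K+1+j).choose j : ℕ):ℝ) * (((K:ℝ)+1) * (K.factorial:ℝ)) * (j.factorial:ℝ)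
      = ((K+j+1).factorial:ℝ) := by rw [← hf5, hcf, hf4]
  unfold cc
  rw [eq_comm]
  field_simp
  linear_combination ((((n+j+1).choose (2*j+1) : ℕ):ℝ)) * hkey
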